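/- The randomized serial dictatorship mechanism for two-sided matching is ordinally strategy-proof: for every agent i, every preference profile, every misreport by i, and every acceptable partner x of i, the probability (over the uniformly random priority order) that i is matched to a partner weakly preferred to x under truthful reporting is at least the corresponding probability under the misreport. -/

import Mathlib

/- Preferences: strict orders over the other side plus the outside option ⊥ (`none`),
encoded by rank equivalences (higher rank = more preferred). -/
abbrev WPref (m : ℕ) := Option (Fin m) ≃ Fin (m + 1)
abbrev FPref (n : ℕ) := Option (Fin n) ≃ Fin (n + 1)

attribute [local instance] Classical.propDecidable

/-- State of serial dictatorship: the (partial) matching, from both sides. -/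
abbrev SDState (n m : ℕ) := (Fin n → Option (Fin m)) × (Fin m → Option (Fin n))

/-- Processing one agent in serial dictatorship: if the agent is not yet matched, it is
matched to its most preferred not-yet-matched acceptable partner on the other side
(or left unmatched if none is acceptable). -/
noncomputable def sdStep {n m : ℕ} (pw : Fin n → WPref m) (fp : Fin m → FPref n)
    (s : SDState n m) : (Fin n ⊕ Fin m) → SDState n m
  | Sum.inl w =>
    if s.1 w ≠ none then s
    else
      match (Finset.univ.filter fun f => s.2 f = none ∧ pw w (some f) > pw w none).toList.argmax
          (fun f => pw w (some f)) with
      | none => s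
      | some f => (Function.update s.1 w (some f), Function.update s.2 f (some w))
  | Sum.inr f =>
    if s.2 f ≠ none then s
    else
      match (Finset.univ.filter fun w => s.1 w = none ∧ fp f (some w) > fp f none).toList.argmax
          (fun w => fp f (some w)) with
      | none => s
      | some w => (Function.update s.1 w (some f), Function.update s.2 f (some w))

/-- Running serial dictatorship on a list of agents, starting from the empty matching. -/
noncomputable def sdRun {n m : ℕ} (pw : Fin n → WPref m) (fp : Fin m → FPref n)
    (L : List (Fin n ⊕ Fin m)) : SDState n m :=
  L.foldl (sdStep pw fp) (fun _ => none, fun _ => none)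

/-- The processing order induced by a permutation `π` of all agents. -/
noncomputable def sdOrder {n m : ℕ} (π : Equiv.Perm (Fin n ⊕ Fin m)) :
    List (Fin n ⊕ Fin m) :=
  (Finset.univ : Finset (Fin n ⊕ Fin m)).toList.map π


section
variable {n m : ℕ} (pw : Fin n → WPref m) (fp : Fin m → FPref n)

lemma step_skip_w (s : SDState n m) (w : Fin n) (h : s.1 w ≠ none) :
    sdStep pw fp s (Sum.inl w) = s := by
  simp only [sdStep, if_pos h]

lemma step_none_w (s : SDState n m) (w : Fin n) (h : s.1 w = none)
    (hA : ((Finset.univ.filter fun f => s.2 f = none ∧ pw w (some f) > pw w none).toList.argmax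
          (fun f => pw w (some f))) = none) :
    sdStep pw fp s (Sum.inl w) = s := by
  simp only [sdStep, h, ne_eq, not_true_eq_false, if_false, hA]

lemma step_some_w (s : SDState n m) (w : Fin n) (f0 : Fin m) (h : s.1 w = none)
    (hA : ((Finset.univ.filter fun f => s.2 f = none ∧ pw w (some f) > pw w none).toList.argmax
          (fun f => pw w (some f))) = some f0) :
    sdStep pw fp s (Sum.inl w) = (Function.update s.1 w (some f0), Function.update s.2 f0 (some w)) := by
  simp only [sdStep, h, ne_eq, not_true_eq_false, if_false, hA]

lemma step_skip_f (s : SDState n m) (f : Fin m) (h : s.2 f ≠ none) :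
    sdStep pw fp s (Sum.inr f) = s := by
  simp only [sdStep, if_pos h]

lemma step_none_f (s : SDState n m) (f : Fin m) (h : s.2 f = none)
    (hA : ((Finset.univ.filter fun w => s.1 w = none ∧ fp f (some w) > fp f none).toList.argmax
          (fun w => fp f (some w))) = none) :
    sdStep pw fp s (Sum.inr f) = s := by
  simp only [sdStep, h, ne_eq, not_true_eq_false, if_false, hA]

lemma step_some_f (s : SDState n m) (f : Fin m) (w0 : Fin n) (h : s.2 f = none)
    (hA : ((Finset.univ.filter fun w => s.1 w = none ∧ fp f (some w) > fp f none).toList.argmax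
          (fun w => fp f (some w))) = some w0) :
    sdStep pw fp s (Sum.inr f) = (Function.update s.1 w0 (some f), Function.update s.2 f (some w0)) := by
  simp only [sdStep, h, ne_eq, not_true_eq_false, if_false, hA]

lemma chosen_w (s : SDState n m) (w : Fin n) (f0 : Fin m)
    (hA : ((Finset.univ.filter fun f => s.2 f = none ∧ pw w (some f) > pw w none).toList.argmax
          (fun f => pw w (some f))) = some f0) :
    s.2 f0 = none ∧ pw w (some f0) > pw w none := by
  have := List.argmax_mem (Option.mem_def.2 hA)
  rw [Finset.mem_toList, Finset.mem_filter] at this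
  exact this.2

lemma chosen_f (s : SDState n m) (f : Fin m) (w0 : Fin n)
    (hA : ((Finset.univ.filter fun w => s.1 w = none ∧ fp f (some w) > fp f none).toList.argmax
          (fun w => fp f (some w))) = some w0) :
    s.1 w0 = none ∧ fp f (some w0) > fp f none := by
  have := List.argmax_mem (Option.mem_def.2 hA)
  rw [Finset.mem_toList, Finset.mem_filter] at this
  exact this.2
end

section
variable {n m : ℕ} (pw : Fin n → WPref m) (fp : Fin m → FPref n)

lemma step_mono_w (s : SDState n m) (a : Fin n ⊕ Fin m) (w : Fin n) (f : Fin m)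
    (h : s.1 w = some f) : (sdStep pw fp s a).1 w = some f := by
  cases a with
  | inl w' =>
    by_cases h' : s.1 w' = none
    · rcases hA : ((Finset.univ.filter fun f => s.2 f = none ∧ pw w' (some f) > pw w' none).toList.argmax
          (fun f => pw w' (some f))) with _ | f0
      · rw [step_none_w pw fp s w' h' hA]; exact h
      · rw [step_some_w pw fp s w' f0 h' hA]
        have hww : w ≠ w' := fun he => by rw [he, h'] at h; exact nomatch h
        simpa [Function.update_of_ne hww] using h
    · rw [step_skip_w pw fp s w' h']; exact h
  | inr f' =>
    by_cases h' : s.2 f' = none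
    · rcases hA : ((Finset.univ.filter fun w => s.1 w = none ∧ fp f' (some w) > fp f' none).toList.argmax
          (fun w => fp f' (some w))) with _ | w0
      · rw [step_none_f pw fp s f' h' hA]; exact h
      · rw [step_some_f pw fp s f' w0 h' hA]
        have hw : w ≠ w0 := fun he => by
          rw [he, (chosen_f fp s f' w0 hA).1] at h; exact nomatch h
        simpa [Function.update_of_ne hw] using h
    · rw [step_skip_f pw fp s f' h']; exact h

lemma step_mono_f (s : SDState n m) (a : Fin n ⊕ Fin m) (f : Fin m) (w : Fin n)
    (h : s.2 f = some w) : (sdStep pw fp s a).2 f = some w := by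
  cases a with
  | inl w' =>
    by_cases h' : s.1 w' = none
    · rcases hA : ((Finset.univ.filter fun f => s.2 f = none ∧ pw w' (some f) > pw w' none).toList.argmax
          (fun f => pw w' (some f))) with _ | f0
      · rw [step_none_w pw fp s w' h' hA]; exact h
      · rw [step_some_w pw fp s w' f0 h' hA]
        have hf : f ≠ f0 := fun he => by
          rw [he, (chosen_w pw s w' f0 hA).1] at h; exact nomatch h
        simpa [Function.update_of_ne hf] using h
    · rw [step_skip_w pw fp s w' h']; exact h
  | inr f' =>
    by_cases h' : s.2 f' = none
    · rcases hA : ((Finset.univ.filter fun w => s.1 w = none ∧ fp f' (some w) > fp f' none).toList.argmax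
          (fun w => fp f' (some w))) with _ | w0
      · rw [step_none_f pw fp s f' h' hA]; exact h
      · rw [step_some_f pw fp s f' w0 h' hA]
        have hf : f ≠ f' := fun he => by rw [he, h'] at h; exact nomatch h
        simpa [Function.update_of_ne hf] using h
    · rw [step_skip_f pw fp s f' h']; exact h

def SDCons {n m : ℕ} (s : SDState n m) : Prop :=
  ∀ (w : Fin n) (f : Fin m), s.1 w = some f ↔ s.2 f = some w

lemma step_cons (s : SDState n m) (hc : SDCons s) (a : Fin n ⊕ Fin m) :
    SDCons (sdStep pw fp s a) := by
  cases a with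
  | inl w' =>
    by_cases h' : s.1 w' = none
    · rcases hA : ((Finset.univ.filter fun f => s.2 f = none ∧ pw w' (some f) > pw w' none).toList.argmax
          (fun f => pw w' (some f))) with _ | f0
      · rw [step_none_w pw fp s w' h' hA]; exact hc
      · rw [step_some_w pw fp s w' f0 h' hA]
        intro w f
        by_cases hw : w = w' <;> by_cases hf : f = f0
        · rw [hw, hf]; simp
        · rw [hw]
          simp only [Function.update_self, Function.update_of_ne hf]
          constructor
          · intro he; exact absurd (Option.some.inj he).symm hf
          · intro he; rw [(hc w' f).2 he] at h'; exact absurd h' (Option.some_ne_none f)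
        · rw [hf]
          simp only [Function.update_of_ne hw, Function.update_self]
          constructor
          · intro he
            have := (hc w f0).1 he
            rw [(chosen_w pw s w' f0 hA).1] at this; exact absurd this.symm (Option.some_ne_none w)
          · intro he; exact absurd (Option.some.inj he) (Ne.symm hw)
        · simp only [Function.update_of_ne hw, Function.update_of_ne hf]; exact hc w f
    · rw [step_skip_w pw fp s w' h']; exact hc
  | inr f' =>
    by_cases h' : s.2 f' = none
    · rcases hA : ((Finset.univ.filter fun w => s.1 w = none ∧ fp f' (some w) > fp f' none).toList.argmax
          (fun w => fp f' (some w))) with _ | w0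
      · rw [step_none_f pw fp s f' h' hA]; exact hc
      · rw [step_some_f pw fp s f' w0 h' hA]
        intro w f
        by_cases hw : w = w0 <;> by_cases hf : f = f'
        · rw [hw, hf]; simp
        · rw [hw]
          simp only [Function.update_self, Function.update_of_ne hf]
          constructor
          · intro he; exact absurd (Option.some.inj he).symm hf
          · intro he
            have := (hc w0 f).2 he
            rw [(chosen_f fp s f' w0 hA).1] at this; exact absurd this.symm (Option.some_ne_none f)
        · rw [hf]
          simp only [Function.update_of_ne hw, Function.update_self]
          constructor
          · intro he
            have := (hc w f').1 he
            rw [h'] at this; exact absurd this.symm (Option.some_ne_none w)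
          · intro he; exact absurd (Option.some.inj he) (fun hx => hw hx.symm)
        · simp only [Function.update_of_ne hw, Function.update_of_ne hf]; exact hc w f
    · rw [step_skip_f pw fp s f' h']; exact hc
end

section
variable {n m : ℕ} (pw : Fin n → WPref m) (fp : Fin m → FPref n)

lemma fold_mono_w (L : List (Fin n ⊕ Fin m)) (s : SDState n m) (w : Fin n) (f : Fin m)
    (h : s.1 w = some f) : (L.foldl (sdStep pw fp) s).1 w = some f := by
  induction L generalizing s with
  | nil => exact h
  | cons a L ih => exact ih _ (step_mono_w pw fp s a w f h)

lemma fold_mono_f (L : List (Fin n ⊕ Fin m)) (s : SDState n m) (f : Fin m) (w : Fin n)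
    (h : s.2 f = some w) : (L.foldl (sdStep pw fp) s).2 f = some w := by
  induction L generalizing s with
  | nil => exact h
  | cons a L ih => exact ih _ (step_mono_f pw fp s a f w h)

lemma fold_cons (L : List (Fin n ⊕ Fin m)) (s : SDState n m) (hc : SDCons s) :
    SDCons (L.foldl (sdStep pw fp) s) := by
  induction L generalizing s with
  | nil => exact hc
  | cons a L ih => exact ih _ (step_cons pw fp s hc a)

/-- If a worker unmatched in `s` ends up matched to `f'` after running a list from `s`,
then `f'` was unmatched in `s`. -/
lemma fold_avail_w (L : List (Fin n ⊕ Fin m)) (s : SDState n m) (hc : SDCons s)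
    (w : Fin n) (h0 : s.1 w = none) (f' : Fin m)
    (hfin : (L.foldl (sdStep pw fp) s).1 w = some f') : s.2 f' = none := by
  by_contra hne
  obtain ⟨u, hu⟩ := Option.ne_none_iff_exists'.1 hne
  have hsu : s.1 u = some f' := (hc u f').2 hu
  have h1 : (L.foldl (sdStep pw fp) s).1 u = some f' := fold_mono_w pw fp L s u f' hsu
  have hc' : SDCons (L.foldl (sdStep pw fp) s) := fold_cons pw fp L s hc
  have h2 : u = w := by
    have ha := (hc' u f').1 h1
    have hb := (hc' w f').1 hfin
    rw [ha] at hb; exact Option.some.inj hb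
  rw [h2, h0] at hsu; exact nomatch hsu

lemma fold_avail_f (L : List (Fin n ⊕ Fin m)) (s : SDState n m) (hc : SDCons s)
    (f : Fin m) (h0 : s.2 f = none) (w' : Fin n)
    (hfin : (L.foldl (sdStep pw fp) s).2 f = some w') : s.1 w' = none := by
  by_contra hne
  obtain ⟨u, hu⟩ := Option.ne_none_iff_exists'.1 hne
  have hsu : s.2 u = some w' := (hc w' u).1 hu
  have h1 : (L.foldl (sdStep pw fp) s).2 u = some w' := fold_mono_f pw fp L s u w' hsu
  have hc' : SDCons (L.foldl (sdStep pw fp) s) := fold_cons pw fp L s hc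
  have h2 : u = f := by
    have ha := (hc' w' u).2 h1
    have hb := (hc' w' f).2 hfin
    rw [ha] at hb; exact Option.some.inj hb
  rw [h2, h0] at hsu; exact nomatch hsu

/-- Steps of agents other than worker `w` don't depend on `w`'s report. -/
lemma step_update_w (w : Fin n) (e' : WPref m) (s : SDState n m) (a : Fin n ⊕ Fin m)
    (ha : a ≠ Sum.inl w) :
    sdStep (Function.update pw w e') fp s a = sdStep pw fp s a := by
  cases a with
  | inl w' =>
    have hw : w' ≠ w := fun he => ha (by rw [he])
    simp only [sdStep, Function.update_of_ne hw]
  | inr f' => simp only [sdStep]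

lemma fold_update_w (w : Fin n) (e' : WPref m) (L : List (Fin n ⊕ Fin m))
    (hL : Sum.inl w ∉ L) (s : SDState n m) :
    L.foldl (sdStep (Function.update pw w e') fp) s = L.foldl (sdStep pw fp) s := by
  induction L generalizing s with
  | nil => rfl
  | cons a L ih =>
    simp only [List.foldl_cons]
    rw [step_update_w pw fp w e' s a (fun he => hL (he ▸ List.mem_cons_self)),
      ih (fun hm => hL (List.mem_cons_of_mem a hm))]

lemma step_update_f (f : Fin m) (e' : FPref n) (s : SDState n m) (a : Fin n ⊕ Fin m)
    (ha : a ≠ Sum.inr f) :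
    sdStep pw (Function.update fp f e') s a = sdStep pw fp s a := by
  cases a with
  | inl w' => simp only [sdStep]
  | inr f' =>
    have hf : f' ≠ f := fun he => ha (by rw [he])
    simp only [sdStep, Function.update_of_ne hf]

lemma fold_update_f (f : Fin m) (e' : FPref n) (L : List (Fin n ⊕ Fin m))
    (hL : Sum.inr f ∉ L) (s : SDState n m) :
    L.foldl (sdStep pw (Function.update fp f e')) s = L.foldl (sdStep pw fp) s := by
  induction L generalizing s with
  | nil => rfl
  | cons a L ih =>
    simp only [List.foldl_cons]
    rw [step_update_f pw fp f e' s a (fun he => hL (he ▸ List.mem_cons_self)),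
      ih (fun hm => hL (List.mem_cons_of_mem a hm))]
end

section
variable {n m : ℕ} (pw : Fin n → WPref m) (fp : Fin m → FPref n)

lemma cons_init : SDCons ((fun _ => none, fun _ => none) : SDState n m) := by
  intro w f; simp

lemma key_w (w : Fin n) (e' : WPref m) (x : Fin m) (hx : pw w (some x) > pw w none)
    (π : Equiv.Perm (Fin n ⊕ Fin m))
    (h : pw w ((sdRun (Function.update pw w e') fp (sdOrder π)).1 w) ≥ pw w (some x)) :
    pw w ((sdRun pw fp (sdOrder π)).1 w) ≥ pw w (some x) := by
  set pw' := Function.update pw w e' with hpw'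
  have hmem : Sum.inl w ∈ sdOrder π :=
    List.mem_map.2 ⟨π.symm (Sum.inl w), Finset.mem_toList.2 (Finset.mem_univ _),
      π.apply_symm_apply _⟩
  have hnd : (sdOrder π).Nodup := (Finset.nodup_toList _).map π.injective
  obtain ⟨L1, L2, hL⟩ := List.append_of_mem hmem
  rw [hL] at hnd
  rw [List.nodup_append'] at hnd
  have h1 : Sum.inl w ∉ L1 := fun hm => hnd.2.2 hm (List.mem_cons_self)
  have h2 : Sum.inl w ∉ L2 := (List.nodup_cons.1 hnd.2.1).1
  rw [sdRun, hL, List.foldl_append, List.foldl_cons] at h ⊢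
  set init : SDState n m := (fun _ => none, fun _ => none) with hinit
  rw [fold_update_w pw fp w e' L1 h1 init] at h
  set s := L1.foldl (sdStep pw fp) init with hs
  have hcs : SDCons s := fold_cons pw fp L1 init cons_init
  by_cases h0 : s.1 w = none
  · -- worker unmatched when processed
    rcases hMv : ((L2.foldl (sdStep pw' fp) (sdStep pw' fp s (Sum.inl w)))).1 w with _ | f'
    · rw [hMv] at h
      exact absurd (lt_of_lt_of_le hx h) (lt_irrefl _)
    · rw [hMv] at h
      have hav : s.2 f' = none :=
        fold_avail_w pw' fp (Sum.inl w :: L2) s hcs w h0 f' hMv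
      have hf'acc : pw w (some f') > pw w none := lt_of_lt_of_le hx h
      have hmemf : f' ∈ ((Finset.univ.filter
          fun f => s.2 f = none ∧ pw w (some f) > pw w none).toList) := by
        rw [Finset.mem_toList, Finset.mem_filter]
        exact ⟨Finset.mem_univ _, hav, hf'acc⟩
      rcases hA : ((Finset.univ.filter fun f => s.2 f = none ∧ pw w (some f) > pw w none).toList.argmax
          (fun f => pw w (some f))) with _ | fstar
      · rw [List.argmax_eq_none] at hA
        rw [hA] at hmemf; exact absurd hmemf (List.not_mem_nil)
      · have hle : pw w (some f') ≤ pw w (some fstar) :=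
          List.le_of_mem_argmax (f := fun f => pw w (some f)) hmemf (Option.mem_def.2 hA)
        rw [step_some_w pw fp s w fstar h0 hA]
        have : (L2.foldl (sdStep pw fp)
            (Function.update s.1 w (some fstar), Function.update s.2 fstar (some w))).1 w
            = some fstar :=
          fold_mono_w pw fp L2 _ w fstar (by simp)
        rw [this]
        exact le_trans h hle
  · -- worker already matched when processed: report irrelevant
    obtain ⟨f0, hf0⟩ := Option.ne_none_iff_exists'.1 h0
    rw [step_skip_w pw' fp s w (by rw [hf0]; exact Option.some_ne_none f0)] at h
    rw [step_skip_w pw fp s w (by rw [hf0]; exact Option.some_ne_none f0)]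
    rw [fold_mono_w pw' fp L2 s w f0 hf0] at h
    rw [fold_mono_w pw fp L2 s w f0 hf0]
    exact h
end

section
variable {n m : ℕ} (pw : Fin n → WPref m) (fp : Fin m → FPref n)

lemma key_f (f : Fin m) (e' : FPref n) (x : Fin n) (hx : fp f (some x) > fp f none)
    (π : Equiv.Perm (Fin n ⊕ Fin m))
    (h : fp f ((sdRun pw (Function.update fp f e') (sdOrder π)).2 f) ≥ fp f (some x)) :
    fp f ((sdRun pw fp (sdOrder π)).2 f) ≥ fp f (some x) := by
  set fp' := Function.update fp f e' with hfp'
  have hmem : Sum.inr f ∈ sdOrder π :=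
    List.mem_map.2 ⟨π.symm (Sum.inr f), Finset.mem_toList.2 (Finset.mem_univ _),
      π.apply_symm_apply _⟩
  have hnd : (sdOrder π).Nodup := (Finset.nodup_toList _).map π.injective
  obtain ⟨L1, L2, hL⟩ := List.append_of_mem hmem
  rw [hL] at hnd
  rw [List.nodup_append'] at hnd
  have h1 : Sum.inr f ∉ L1 := fun hm => hnd.2.2 hm (List.mem_cons_self)
  have h2 : Sum.inr f ∉ L2 := (List.nodup_cons.1 hnd.2.1).1
  rw [sdRun, hL, List.foldl_append, List.foldl_cons] at h ⊢
  set init : SDState n m := (fun _ => none, fun _ => none) with hinit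
  rw [fold_update_f pw fp f e' L1 h1 init] at h
  set s := L1.foldl (sdStep pw fp) init with hs
  have hcs : SDCons s := fold_cons pw fp L1 init cons_init
  by_cases h0 : s.2 f = none
  · rcases hMv : ((L2.foldl (sdStep pw fp') (sdStep pw fp' s (Sum.inr f)))).2 f with _ | w'
    · rw [hMv] at h
      exact absurd (lt_of_lt_of_le hx h) (lt_irrefl _)
    · rw [hMv] at h
      have hav : s.1 w' = none :=
        fold_avail_f pw fp' (Sum.inr f :: L2) s hcs f h0 w' hMv
      have hw'acc : fp f (some w') > fp f none := lt_of_lt_of_le hx h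
      have hmemw : w' ∈ ((Finset.univ.filter
          fun w => s.1 w = none ∧ fp f (some w) > fp f none).toList) := by
        rw [Finset.mem_toList, Finset.mem_filter]
        exact ⟨Finset.mem_univ _, hav, hw'acc⟩
      rcases hA : ((Finset.univ.filter fun w => s.1 w = none ∧ fp f (some w) > fp f none).toList.argmax
          (fun w => fp f (some w))) with _ | wstar
      · rw [List.argmax_eq_none] at hA
        rw [hA] at hmemw; exact absurd hmemw (List.not_mem_nil)
      · have hle : fp f (some w') ≤ fp f (some wstar) :=
          List.le_of_mem_argmax (f := fun w => fp f (some w)) hmemw (Option.mem_def.2 hA)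
        rw [step_some_f pw fp s f wstar h0 hA]
        have : (L2.foldl (sdStep pw fp)
            (Function.update s.1 wstar (some f), Function.update s.2 f (some wstar))).2 f
            = some wstar :=
          fold_mono_f pw fp L2 _ f wstar (by simp)
        rw [this]
        exact le_trans h hle
  · obtain ⟨w0, hw0⟩ := Option.ne_none_iff_exists'.1 h0
    rw [step_skip_f pw fp' s f (by rw [hw0]; exact Option.some_ne_none w0)] at h
    rw [step_skip_f pw fp s f (by rw [hw0]; exact Option.some_ne_none w0)]
    rw [fold_mono_f pw fp' L2 s f w0 hw0] at h
    rw [fold_mono_f pw fp L2 s f w0 hw0]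
    exact h

lemma card_subtype_mono {P Q : Equiv.Perm (Fin n ⊕ Fin m) → Prop} (h : ∀ π, Q π → P π) :
    Nat.card {π // P π} ≥ Nat.card {π // Q π} :=
  Nat.card_le_card_of_injective (fun p => (⟨p.1, h p.1 p.2⟩ : {π // P π}))
    (by rintro ⟨a, ha⟩ ⟨b, hb⟩ hab; simpa [Subtype.ext_iff] using hab)
end


/-- Randomized serial dictatorship is ordinally strategy-proof: for every agent, every
misreport, and every acceptable partner `x`, the number of priority orders (uniformly
random permutations) under which the agent's truthful match is weakly preferred
(under its true preference) to `x` is at least the corresponding number under the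
misreport; i.e., the truthful match distribution first-order stochastically dominates
the misreport match distribution. -/
theorem rsd_ordinally_strategyproof (n m : ℕ) (pw : Fin n → WPref m) (fp : Fin m → FPref n) :
    (∀ (w : Fin n) (e' : WPref m) (x : Fin m), pw w (some x) > pw w none →
      Nat.card {π : Equiv.Perm (Fin n ⊕ Fin m) //
          pw w ((sdRun pw fp (sdOrder π)).1 w) ≥ pw w (some x)} ≥
        Nat.card {π : Equiv.Perm (Fin n ⊕ Fin m) //
          pw w ((sdRun (Function.update pw w e') fp (sdOrder π)).1 w) ≥ pw w (some x)}) ∧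
    (∀ (f : Fin m) (e' : FPref n) (x : Fin n), fp f (some x) > fp f none →
      Nat.card {π : Equiv.Perm (Fin n ⊕ Fin m) //
          fp f ((sdRun pw fp (sdOrder π)).2 f) ≥ fp f (some x)} ≥
        Nat.card {π : Equiv.Perm (Fin n ⊕ Fin m) //
          fp f ((sdRun pw (Function.update fp f e') (sdOrder π)).2 f) ≥ fp f (some x)}) := by
  constructor
  · intro w e' x hx
    exact card_subtype_mono (fun π => key_w pw fp w e' x hx π)
  · intro f e' x hx
    exact card_subtype_mono (fun π => key_f pw fp f e' x hx π)
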